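/- Let u be C⁴ on the closed half-space ℝⁿ₊ with u = ∂u/∂x_n = 0 on the boundary, solving Δ²u = |x|^a|u|^{p−1}u, with |x|^{a/(p+1)} u ∈ L^{p+1}, Δu ∈ L², and R^{−4}∫_{A_R}u² + R^{−2}∫_{A_R}|∇u|² → 0 as R → ∞. If additionally ((n−4)/2)∫(Δu)² = ((n+a)/(p+1))∫|x|^a|u|^{p+1} and ∫(Δu)² = ∫|x|^a|u|^{p+1} over ℝⁿ₊, and 1 < p < (n+4+2a)/(n−4), then u ≡ 0. -/
import Mathlib


open MeasureTheory Set Filter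

noncomputable def lap {n : ℕ} (f : EuclideanSpace ℝ (Fin n) → ℝ)
    (x : EuclideanSpace ℝ (Fin n)) : ℝ :=
  ∑ i, fderiv ℝ (fun y => fderiv ℝ f y (EuclideanSpace.single i 1)) x (EuclideanSpace.single i 1)

/-- If a `C⁴` solution of `Δ²u = |x|^a|u|^(p-1)u` on the half-space with Dirichlet boundary
conditions satisfies the integrability and decay hypotheses together with the two identities
`((n-4)/2)∫(Δu)² = ((n+a)/(p+1))∫|x|^a|u|^(p+1)` and `∫(Δu)² = ∫|x|^a|u|^(p+1)`, and
`1 < p < (n+4+2a)/(n-4)`, then `u ≡ 0`. -/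
theorem stmt_19 {n : ℕ} (hn : 5 ≤ n) (i : Fin n) (p a : ℝ)
    (hp1 : 1 < p) (hp2 : p < ((n : ℝ) + 4 + 2 * a) / ((n : ℝ) - 4)) (ha : 0 ≤ a)
    (u : EuclideanSpace ℝ (Fin n) → ℝ)
    (hu : ContDiffOn ℝ 4 u {x | 0 ≤ x i})
    (hbd : ∀ x : EuclideanSpace ℝ (Fin n), x i = 0 →
      u x = 0 ∧ fderiv ℝ u x (EuclideanSpace.single i 1) = 0)
    (hsol : ∀ x : EuclideanSpace ℝ (Fin n), 0 < x i →
      lap (lap u) x = ‖x‖ ^ a * |u x| ^ (p - 1) * u x)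
    (hLp : Integrable (fun x => ‖x‖ ^ a * |u x| ^ (p + 1))
      (volume.restrict {x : EuclideanSpace ℝ (Fin n) | 0 < x i}))
    (hL2 : Integrable (fun x => (lap u x) ^ 2)
      (volume.restrict {x : EuclideanSpace ℝ (Fin n) | 0 < x i}))
    (hdecay : Tendsto (fun R : ℝ =>
        R ^ (-4 : ℝ) * (∫ x in {x : EuclideanSpace ℝ (Fin n) |
            0 < x i ∧ R < ‖x‖ ∧ ‖x‖ < 2 * R}, (u x) ^ 2)
        + R ^ (-2 : ℝ) * (∫ x in {x : EuclideanSpace ℝ (Fin n) |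
            0 < x i ∧ R < ‖x‖ ∧ ‖x‖ < 2 * R}, ‖gradient u x‖ ^ 2)) atTop (nhds 0))
    (hid1 : (((n : ℝ) - 4) / 2) * (∫ x in {x : EuclideanSpace ℝ (Fin n) | 0 < x i},
          (lap u x) ^ 2)
        = (((n : ℝ) + a) / (p + 1)) * (∫ x in {x : EuclideanSpace ℝ (Fin n) | 0 < x i},
            ‖x‖ ^ a * |u x| ^ (p + 1)))
    (hid2 : (∫ x in {x : EuclideanSpace ℝ (Fin n) | 0 < x i}, (lap u x) ^ 2)
        = ∫ x in {x : EuclideanSpace ℝ (Fin n) | 0 < x i}, ‖x‖ ^ a * |u x| ^ (p + 1)) :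
    ∀ x : EuclideanSpace ℝ (Fin n), 0 ≤ x i → u x = 0 := by
  intro x hx
  set S : Set (EuclideanSpace ℝ (Fin n)) := {x | 0 < x i} with hS
  have hSopen : IsOpen S := by
    have : Continuous fun y : EuclideanSpace ℝ (Fin n) => y i := by
      exact (EuclideanSpace.proj i).continuous
    exact isOpen_lt continuous_const this
  set g : EuclideanSpace ℝ (Fin n) → ℝ := fun y => ‖y‖ ^ a * |u y| ^ (p + 1) with hg
  have hgnn : ∀ y, 0 ≤ g y := fun y =>
    mul_nonneg (Real.rpow_nonneg (norm_nonneg _) _) (Real.rpow_nonneg (abs_nonneg _) _)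
  have hn4 : (0:ℝ) < (n:ℝ) - 4 := by
    have : (5:ℝ) ≤ (n:ℝ) := by exact_mod_cast hn
    linarith
  have hI0 : (∫ y in S, g y) = 0 := by
    have hInn : 0 ≤ ∫ y in S, g y := integral_nonneg hgnn
    rw [hid2] at hid1
    have hc : ((n:ℝ) - 4) / 2 < ((n:ℝ) + a) / (p + 1) := by
      rw [div_lt_div_iff₀ (by norm_num) (by linarith)]
      have hp2' : p * ((n:ℝ) - 4) < (n:ℝ) + 4 + 2 * a := by
        have := (lt_div_iff₀ hn4).mp hp2
        linarith
      nlinarith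
    nlinarith [hInn, hid1]
  have hae : g =ᵐ[volume.restrict S] 0 :=
    (integral_eq_zero_iff_of_nonneg hgnn hLp).mp hI0
  rcases eq_or_lt_of_le hx with h0 | hpos
  · exact (hbd x h0.symm).1
  · by_contra hux
    have hxS : x ∈ S := hpos
    have hxne : x ≠ 0 := by
      intro h
      rw [h] at hpos
      simp at hpos
    have hxnorm : 0 < ‖x‖ := norm_pos_iff.mpr hxne
    have hcont : ContinuousAt u x := by
      refine hu.continuousOn.continuousAt ?_
      exact mem_of_superset (hSopen.mem_nhds hxS) (fun y hy => le_of_lt (show 0 < y i from hy))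
    have hgc : ContinuousAt g x := by
      refine ContinuousAt.mul ?_ ?_
      · exact ContinuousAt.rpow_const continuous_norm.continuousAt (Or.inl (ne_of_gt hxnorm))
      · exact ContinuousAt.rpow_const hcont.abs (Or.inr (by linarith))
    have hgx : 0 < g x :=
      mul_pos (Real.rpow_pos_of_pos hxnorm a) (Real.rpow_pos_of_pos (abs_pos.mpr hux) _)
    have hnhds : S ∩ {y | g x / 2 < g y} ∈ nhds x := by
      refine Filter.inter_mem (hSopen.mem_nhds hxS) ?_
      exact hgc.preimage_mem_nhds (Ioi_mem_nhds (by linarith))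
    obtain ⟨ε, hε, hball⟩ := Metric.mem_nhds_iff.mp hnhds
    have hμ : volume (Metric.ball x ε) ≠ 0 :=
      ne_of_gt (Metric.measure_ball_pos volume x hε)
    have hae' : ∀ᵐ y ∂(volume.restrict (Metric.ball x ε)), g y = 0 :=
      hae.filter_mono (ae_mono (Measure.restrict_mono (fun y hy => (hball hy).1) le_rfl))
    have hmem : ∀ᵐ y ∂(volume.restrict (Metric.ball x ε)), y ∈ Metric.ball x ε :=
      ae_restrict_mem measurableSet_ball
    have hne : (ae (volume.restrict (Metric.ball x ε))).NeBot :=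
      ae_neBot.mpr (by rwa [Ne, Measure.restrict_eq_zero])
    obtain ⟨y, hy0, hyB⟩ := (hae'.and hmem).exists
    have : g x / 2 < g y := (hball hyB).2
    rw [hy0] at this
    linarith
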